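/- (Lemma 1, part 3.) Under assumptions A1–A2, there exist C < ∞ and ρ ∈ (0,1) such that for all 1 ≤ j ≤ d and p ≥ 1, sup_{x_{1:j} ∈ E^j} ‖π_{p,0}(· | x_{1:j}) − π_{p−1,0}(· | x_{1:j})‖_tv ≤ C ρ^{p−1}, i.e. the conditional distributions of the (j+1)-th coordinate of the time-0 smoother given the first j coordinates converge geometrically in total variation as the observation horizon grows. -/

import Mathlib

open MeasureTheory Set

/-- Total variation distance between two measures. -/
noncomputable def tvDist {X : Type*} [MeasurableSpace X] (μ ν : Measure X) : ℝ :=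
  ⨆ A : Set X, |(μ A).toReal - (ν A).toReal|

/-- The box `E^d` inside `Fin d → ℝ`. -/
def box (d : ℕ) (E : Set ℝ) : Set (Fin d → ℝ) := Set.univ.pi fun _ => E

/-- Backward functional of the multidimensional HMM on `X = E^d`. -/
noncomputable def mback (d : ℕ) (E : Set ℝ) (f : (Fin d → ℝ) → (Fin d → ℝ) → ℝ)
    (g : ℕ → (Fin d → ℝ) → ℝ) : ℕ → ℕ → (Fin d → ℝ) → ℝ
  | 0, _, _ => 1
  | m + 1, k, x => ∫ z in box d E, f x z * g (k + 1) z * mback d E f g m (k + 1) z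

/-- Density of the time-0 smoother `π_{p,0}` on `E^d` (observations absorbed in `g`). -/
noncomputable def msmootherDen (d : ℕ) (E : Set ℝ) (f0 : (Fin d → ℝ) → ℝ)
    (f : (Fin d → ℝ) → (Fin d → ℝ) → ℝ) (g : ℕ → (Fin d → ℝ) → ℝ) (p : ℕ)
    (x : Fin d → ℝ) : ℝ :=
  f0 x * g 0 x * mback d E f g p 0 x / ∫ y in box d E, f0 y * g 0 y * mback d E f g p 0 y

/-- Marginal density in the first `j` coordinates of a density `π` on `E^d`. -/
noncomputable def marg (d : ℕ) (E : Set ℝ) (π : (Fin d → ℝ) → ℝ) (j : ℕ)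
    (x : Fin d → ℝ) : ℝ :=
  (∫ z in box d E, π (fun i => if (i : ℕ) < j then x i else z i)) / (volume E).toReal ^ j

/-- The conditional law of the `(j+1)`-th coordinate given the first `j` coordinates `x_{1:j}`,
for a density `π` on `E^d`, as a measure on `E ⊂ ℝ`. -/
noncomputable def condLaw (d : ℕ) (E : Set ℝ) (π : (Fin d → ℝ) → ℝ) (j : Fin d)
    (x : Fin d → ℝ) : Measure ℝ :=
  (volume.restrict E).withDensity fun t =>
    ENNReal.ofReal (marg d E π ((j : ℕ) + 1) (Function.update x j t) / marg d E π (j : ℕ) x)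

section Aux
variable {d : ℕ} {a b : ℝ}

lemma box_meas : MeasurableSet (box d (Set.Icc a b)) :=
  MeasurableSet.univ_pi fun _ => measurableSet_Icc

lemma box_vol : volume (box d (Set.Icc a b)) = ENNReal.ofReal (b - a) ^ d := by
  rw [box, volume_pi_pi]; simp

lemma box_vol_toReal (hab : a ≤ b) :
    (volume (box d (Set.Icc a b))).toReal = (b - a) ^ d := by
  rw [box_vol, ENNReal.toReal_pow, ENNReal.toReal_ofReal (by linarith)]

instance box_finite : IsFiniteMeasure (volume.restrict (box d (Set.Icc a b))) := by
  constructor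
  rw [Measure.restrict_apply_univ, box_vol]
  exact ENNReal.pow_lt_top ENNReal.ofReal_lt_top

lemma aux_integrableOn {F : (Fin d → ℝ) → ℝ} (hF : Measurable F) {M : ℝ}
    (hM : ∀ z ∈ box d (Set.Icc a b), |F z| ≤ M) :
    IntegrableOn F (box d (Set.Icc a b)) volume := by
  refine ⟨hF.aestronglyMeasurable, HasFiniteIntegral.of_bounded (C := M) ?_⟩
  filter_upwards [ae_restrict_mem box_meas] with z hz
  simpa [Real.norm_eq_abs] using hM z hz

end Aux

section Aux2
variable {d : ℕ} {a b : ℝ} {f : (Fin d → ℝ) → (Fin d → ℝ) → ℝ}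
  {g : ℕ → (Fin d → ℝ) → ℝ} {Cl Cu : ℝ}

lemma setIntegral_bounds (hab : a ≤ b) {F : (Fin d → ℝ) → ℝ} (hF : Measurable F) {lo hi : ℝ}
    (hlo : ∀ z ∈ box d (Set.Icc a b), lo ≤ F z) (hhi : ∀ z ∈ box d (Set.Icc a b), F z ≤ hi) :
    lo * (b-a)^d ≤ (∫ z in box d (Set.Icc a b), F z) ∧
      (∫ z in box d (Set.Icc a b), F z) ≤ hi * (b-a)^d := by
  have hint : IntegrableOn F (box d (Set.Icc a b)) volume := by
    refine aux_integrableOn hF (M := max |lo| |hi|) (fun z hz => abs_le.2 ⟨?_, ?_⟩)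
    · calc -(max |lo| |hi|) ≤ -|lo| := by simp [le_max_left]
        _ ≤ lo := neg_abs_le lo
        _ ≤ F z := hlo z hz
    · exact (hhi z hz).trans ((le_abs_self hi).trans (le_max_right _ _))
  have hconst : ∀ c : ℝ, IntegrableOn (fun _ : Fin d → ℝ => c) (box d (Set.Icc a b)) volume :=
    fun c => integrableOn_const (by
      rw [box_vol]; exact (ENNReal.pow_lt_top ENNReal.ofReal_lt_top).ne)
  have hV : (volume (box d (Set.Icc a b))).toReal = (b-a)^d := box_vol_toReal hab
  constructor
  · have := setIntegral_mono_on (hconst lo) hint box_meas hlo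
    rw [setIntegral_const, measureReal_def, hV, smul_eq_mul] at this; linarith
  · have := setIntegral_mono_on hint (hconst hi) box_meas hhi
    rw [setIntegral_const, measureReal_def, hV, smul_eq_mul] at this; linarith

lemma mback_meas (hf : Measurable (Function.uncurry f)) (hg : ∀ p, Measurable (g p)) :
    ∀ m k, Measurable (mback d (Set.Icc a b) f g m k) := by
  intro m
  induction m with
  | zero => intro k; simp only [mback]; exact measurable_const
  | succ m ih =>
    intro k
    have hF : StronglyMeasurable fun q : (Fin d → ℝ) × (Fin d → ℝ) =>
        f q.1 q.2 * g (k+1) q.2 * mback d (Set.Icc a b) f g m (k+1) q.2 :=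
      ((hf.mul ((hg (k+1)).comp measurable_snd)).mul
        ((ih (k+1)).comp measurable_snd)).stronglyMeasurable
    have : (mback d (Set.Icc a b) f g (m+1) k) = fun x =>
        ∫ z in box d (Set.Icc a b),
          f x z * g (k+1) z * mback d (Set.Icc a b) f g m (k+1) z := rfl
    rw [this]
    exact hF.integral_prod_right'.measurable

end Aux2

section Aux3
variable {d : ℕ} {a b : ℝ} {f : (Fin d → ℝ) → (Fin d → ℝ) → ℝ}
  {g : ℕ → (Fin d → ℝ) → ℝ} {Cl Cu : ℝ}

lemma mback_bounds (hf : Measurable (Function.uncurry f)) (hg : ∀ p, Measurable (g p))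
    (hCl : 0 < Cl) (hClu : Cl < Cu) (hab : a < b)
    (hA1 : ∀ p : ℕ, 1 ≤ p → ∀ x ∈ box d (Set.Icc a b), ∀ x' ∈ box d (Set.Icc a b),
      Cl ≤ g p x' * f x x' ∧ g p x' * f x x' ≤ Cu) :
    ∀ m k, ∀ x ∈ box d (Set.Icc a b),
      (Cl * (b-a)^d)^m ≤ mback d (Set.Icc a b) f g m k x ∧
        mback d (Set.Icc a b) f g m k x ≤ (Cu * (b-a)^d)^m := by
  have hV : (0:ℝ) < (b-a)^d := pow_pos (by linarith) d
  intro m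
  induction m with
  | zero => intro k x hx; simp [mback]
  | succ m ih =>
    intro k x hx
    have hmb : (mback d (Set.Icc a b) f g (m+1) k x) = ∫ z in box d (Set.Icc a b),
        f x z * g (k+1) z * mback d (Set.Icc a b) f g m (k+1) z := rfl
    have hK : ∀ z ∈ box d (Set.Icc a b),
        Cl ≤ f x z * g (k+1) z ∧ f x z * g (k+1) z ≤ Cu := by
      intro z hz
      obtain ⟨h1, h2⟩ := hA1 (k+1) (Nat.le_add_left 1 k) x hx z hz
      rw [mul_comm] at h1 h2
      exact ⟨h1, h2⟩
    have hmeas : Measurable fun z => f x z * g (k+1) z *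
        mback d (Set.Icc a b) f g m (k+1) z :=
      ((hf.of_uncurry_left.mul (hg (k+1))).mul (mback_meas hf hg m (k+1)))
    have hlo : ∀ z ∈ box d (Set.Icc a b),
        Cl * (Cl * (b-a)^d)^m ≤ f x z * g (k+1) z * mback d (Set.Icc a b) f g m (k+1) z := by
      intro z hz
      exact mul_le_mul (hK z hz).1 (ih (k+1) z hz).1
        (pow_nonneg (mul_pos hCl hV).le m) (le_trans hCl.le (hK z hz).1)
    have hhi : ∀ z ∈ box d (Set.Icc a b),
        f x z * g (k+1) z * mback d (Set.Icc a b) f g m (k+1) z ≤ Cu * (Cu * (b-a)^d)^m := by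
      intro z hz
      exact mul_le_mul (hK z hz).2 (ih (k+1) z hz).2
        (le_trans (pow_nonneg (mul_pos hCl hV).le m) (ih (k+1) z hz).1)
        (hCl.trans hClu).le
    obtain ⟨hL, hH⟩ := setIntegral_bounds hab.le hmeas hlo hhi
    constructor
    · rw [hmb]
      calc (Cl * (b-a)^d)^(m+1) = Cl * (Cl * (b-a)^d)^m * (b-a)^d := by ring
        _ ≤ _ := hL
    · rw [hmb]
      calc _ ≤ Cu * (Cu * (b-a)^d)^m * (b-a)^d := hH
        _ = (Cu * (b-a)^d)^(m+1) := by ring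

end Aux3

section Aux4
variable {d : ℕ} {a b : ℝ} {f : (Fin d → ℝ) → (Fin d → ℝ) → ℝ}
  {g : ℕ → (Fin d → ℝ) → ℝ} {Cl Cu : ℝ}
variable (hf : Measurable (Function.uncurry f)) (hg : ∀ p, Measurable (g p))
  (hCl : 0 < Cl) (hClu : Cl < Cu) (hab : a < b)
  (hA1 : ∀ p : ℕ, 1 ≤ p → ∀ x ∈ box d (Set.Icc a b), ∀ x' ∈ box d (Set.Icc a b),
    Cl ≤ g p x' * f x x' ∧ g p x' * f x x' ≤ Cu)

include hA1 in
lemma hKbound {x : Fin d → ℝ} (hx : x ∈ box d (Set.Icc a b)) (k : ℕ) :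
    ∀ z ∈ box d (Set.Icc a b), Cl ≤ f x z * g (k+1) z ∧ f x z * g (k+1) z ≤ Cu := by
  intro z hz
  obtain ⟨h1, h2⟩ := hA1 (k+1) (Nat.le_add_left 1 k) x hx z hz
  rw [mul_comm] at h1 h2
  exact ⟨h1, h2⟩

include hf hg hCl hClu hab hA1 in
lemma integrand_nonneg_bdd {x : Fin d → ℝ} (hx : x ∈ box d (Set.Icc a b)) (m k : ℕ) :
    ∀ z ∈ box d (Set.Icc a b),
      0 ≤ f x z * g (k+1) z * mback d (Set.Icc a b) f g m (k+1) z ∧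
      f x z * g (k+1) z * mback d (Set.Icc a b) f g m (k+1) z ≤ Cu * (Cu * (b-a)^d)^m := by
  have hV : (0:ℝ) < (b-a)^d := pow_pos (by linarith) d
  intro z hz
  obtain ⟨hb1, hb2⟩ := mback_bounds hf hg hCl hClu hab hA1 m (k+1) z hz
  obtain ⟨hk1, hk2⟩ := hKbound hA1 hx k z hz
  have h0m : (0:ℝ) ≤ mback d (Set.Icc a b) f g m (k+1) z :=
    le_trans (pow_nonneg (mul_pos hCl hV).le m) hb1
  constructor
  · exact mul_nonneg (le_trans hCl.le hk1) h0m
  · exact mul_le_mul hk2 hb2 h0m (hCl.trans hClu).le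

include hf hg hCl hClu hab hA1 in
lemma integrand_integrable {x : Fin d → ℝ} (hx : x ∈ box d (Set.Icc a b)) (m k : ℕ) :
    IntegrableOn (fun z => f x z * g (k+1) z * mback d (Set.Icc a b) f g m (k+1) z)
      (box d (Set.Icc a b)) volume := by
  refine aux_integrableOn
    ((hf.of_uncurry_left.mul (hg (k+1))).mul (mback_meas hf hg m (k+1)))
    (M := Cu * (Cu * (b-a)^d)^m) ?_
  intro z hz
  obtain ⟨h0, h1⟩ := integrand_nonneg_bdd hf hg hCl hClu hab hA1 hx m k z hz
  rwa [abs_of_nonneg h0]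

include hf hg hCl hClu hab hA1 in
lemma mback_succ_ratio :
    ∀ m k, ∀ x ∈ box d (Set.Icc a b),
      Cl * (b-a)^d * mback d (Set.Icc a b) f g m k x ≤ mback d (Set.Icc a b) f g (m+1) k x ∧
      mback d (Set.Icc a b) f g (m+1) k x ≤ Cu * (b-a)^d * mback d (Set.Icc a b) f g m k x := by
  have hV : (0:ℝ) < (b-a)^d := pow_pos (by linarith) d
  intro m
  induction m with
  | zero =>
    intro k x hx
    simp only [mback, mul_one]
    exact setIntegral_bounds hab.le (hf.of_uncurry_left.mul (hg (k+1)))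
      (fun z hz => (hKbound hA1 hx k z hz).1) (fun z hz => (hKbound hA1 hx k z hz).2)
  | succ m ih =>
    intro k x hx
    have hmb2 : (mback d (Set.Icc a b) f g (m+1+1) k x) = ∫ z in box d (Set.Icc a b),
        f x z * g (k+1) z * mback d (Set.Icc a b) f g (m+1) (k+1) z := rfl
    have hmb1 : (mback d (Set.Icc a b) f g (m+1) k x) = ∫ z in box d (Set.Icc a b),
        f x z * g (k+1) z * mback d (Set.Icc a b) f g m (k+1) z := rfl
    have hint1 := integrand_integrable hf hg hCl hClu hab hA1 hx m k
    have hint2 := integrand_integrable hf hg hCl hClu hab hA1 hx (m+1) k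
    constructor
    · have hmono : ∀ z ∈ box d (Set.Icc a b),
          Cl * (b-a)^d * (f x z * g (k+1) z * mback d (Set.Icc a b) f g m (k+1) z) ≤
          f x z * g (k+1) z * mback d (Set.Icc a b) f g (m+1) (k+1) z := by
        intro z hz
        have h1 := (ih (k+1) z hz).1
        have hk0 : (0:ℝ) ≤ f x z * g (k+1) z := le_trans hCl.le (hKbound hA1 hx k z hz).1
        calc Cl * (b-a)^d * (f x z * g (k+1) z * mback d (Set.Icc a b) f g m (k+1) z)
            = (f x z * g (k+1) z) * (Cl * (b-a)^d * mback d (Set.Icc a b) f g m (k+1) z) := by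
              ring
          _ ≤ (f x z * g (k+1) z) * mback d (Set.Icc a b) f g (m+1) (k+1) z :=
              mul_le_mul_of_nonneg_left h1 hk0
      have := setIntegral_mono_on (hint1.const_mul (Cl * (b-a)^d)) hint2 box_meas hmono
      rw [MeasureTheory.integral_const_mul] at this
      rw [hmb1, hmb2]
      exact this
    · have hmono : ∀ z ∈ box d (Set.Icc a b),
          f x z * g (k+1) z * mback d (Set.Icc a b) f g (m+1) (k+1) z ≤
          Cu * (b-a)^d * (f x z * g (k+1) z * mback d (Set.Icc a b) f g m (k+1) z) := by
        intro z hz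
        have h1 := (ih (k+1) z hz).2
        have hk0 : (0:ℝ) ≤ f x z * g (k+1) z := le_trans hCl.le (hKbound hA1 hx k z hz).1
        calc f x z * g (k+1) z * mback d (Set.Icc a b) f g (m+1) (k+1) z
            ≤ (f x z * g (k+1) z) * (Cu * (b-a)^d * mback d (Set.Icc a b) f g m (k+1) z) :=
              mul_le_mul_of_nonneg_left h1 hk0
          _ = Cu * (b-a)^d * (f x z * g (k+1) z * mback d (Set.Icc a b) f g m (k+1) z) := by
              ring
      have := setIntegral_mono_on hint2 (hint1.const_mul (Cu * (b-a)^d)) box_meas hmono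
      rw [MeasureTheory.integral_const_mul] at this
      rw [hmb1, hmb2]
      exact this

include hf hg hCl hClu hab hA1 in
lemma mback_spatial_ratio :
    ∀ m k, ∀ y ∈ box d (Set.Icc a b), ∀ y' ∈ box d (Set.Icc a b),
      mback d (Set.Icc a b) f g m k y ≤ (Cu/Cl) * mback d (Set.Icc a b) f g m k y' := by
  have hV : (0:ℝ) < (b-a)^d := pow_pos (by linarith) d
  intro m k y hy y' hy'
  match m with
  | 0 =>
    simp only [mback]
    rw [mul_one]
    rw [le_div_iff₀ hCl, one_mul]
    linarith
  | m+1 =>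
    have hmb : (mback d (Set.Icc a b) f g (m+1) k y) = ∫ z in box d (Set.Icc a b),
        f y z * g (k+1) z * mback d (Set.Icc a b) f g m (k+1) z := rfl
    have hmb' : (mback d (Set.Icc a b) f g (m+1) k y') = ∫ z in box d (Set.Icc a b),
        f y' z * g (k+1) z * mback d (Set.Icc a b) f g m (k+1) z := rfl
    have hint := integrand_integrable hf hg hCl hClu hab hA1 hy m k
    have hint' := integrand_integrable hf hg hCl hClu hab hA1 hy' m k
    have hmono : ∀ z ∈ box d (Set.Icc a b),
        f y z * g (k+1) z * mback d (Set.Icc a b) f g m (k+1) z ≤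
        (Cu/Cl) * (f y' z * g (k+1) z * mback d (Set.Icc a b) f g m (k+1) z) := by
      intro z hz
      obtain ⟨hb1, hb2⟩ := mback_bounds hf hg hCl hClu hab hA1 m (k+1) z hz
      have h0m : (0:ℝ) ≤ mback d (Set.Icc a b) f g m (k+1) z :=
        le_trans (pow_nonneg (mul_pos hCl hV).le m) hb1
      have hk := (hKbound hA1 hy k z hz).2
      have hk' := (hKbound hA1 hy' k z hz).1
      have : f y z * g (k+1) z ≤ (Cu/Cl) * (f y' z * g (k+1) z) := by
        calc f y z * g (k+1) z ≤ Cu := hk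
          _ = (Cu/Cl) * Cl := by field_simp
          _ ≤ (Cu/Cl) * (f y' z * g (k+1) z) :=
            mul_le_mul_of_nonneg_left hk' (div_nonneg (hCl.trans hClu).le hCl.le)
      calc f y z * g (k+1) z * mback d (Set.Icc a b) f g m (k+1) z
          ≤ ((Cu/Cl) * (f y' z * g (k+1) z)) * mback d (Set.Icc a b) f g m (k+1) z :=
            mul_le_mul_of_nonneg_right this h0m
        _ = (Cu/Cl) * (f y' z * g (k+1) z * mback d (Set.Icc a b) f g m (k+1) z) := by ring
    have := setIntegral_mono_on hint (hint'.const_mul (Cu/Cl)) box_meas hmono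
    rw [MeasureTheory.integral_const_mul] at this
    rw [hmb, hmb']
    exact this

end Aux4

section Aux5
variable {d : ℕ} {a b : ℝ} {f : (Fin d → ℝ) → (Fin d → ℝ) → ℝ}
  {g : ℕ → (Fin d → ℝ) → ℝ} {Cl Cu : ℝ}
variable (hf : Measurable (Function.uncurry f)) (hg : ∀ p, Measurable (g p))
  (hCl : 0 < Cl) (hClu : Cl < Cu) (hab : a < b)
  (hA1 : ∀ p : ℕ, 1 ≤ p → ∀ x ∈ box d (Set.Icc a b), ∀ x' ∈ box d (Set.Icc a b),
    Cl ≤ g p x' * f x x' ∧ g p x' * f x x' ≤ Cu)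

set_option maxHeartbeats 1000000 in
include hf hg hCl hClu hab hA1 in
lemma mback_contraction :
    ∀ m k, ∃ c : ℝ, ∀ z ∈ box d (Set.Icc a b),
      |mback d (Set.Icc a b) f g (m+1) k z - c * mback d (Set.Icc a b) f g m k z| ≤
        ((Cu - Cl) * (b-a)^d / 2) * (1 - Cl/Cu)^m * mback d (Set.Icc a b) f g m k z := by
  have hV : (0:ℝ) < (b-a)^d := pow_pos (by linarith) d
  have hCu : (0:ℝ) < Cu := hCl.trans hClu
  have hε0 : (0:ℝ) < Cl/Cu := div_pos hCl hCu
  have hε1 : Cl/Cu < 1 := (div_lt_one hCu).2 hClu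
  intro m
  induction m with
  | zero =>
    intro k
    refine ⟨(Cl + Cu) * (b-a)^d / 2, fun z hz => ?_⟩
    obtain ⟨h1, h2⟩ := mback_bounds hf hg hCl hClu hab hA1 1 k z hz
    rw [pow_one] at h1 h2
    simp only [mback, mul_one, pow_zero]
    simp only [mback, mul_one] at h1 h2
    rw [abs_le]
    constructor <;> nlinarith
  | succ m ih =>
    intro k
    obtain ⟨c, hc⟩ := ih (k+1)
    -- notation
    set E := Set.Icc a b with hE
    set V : ℝ := (b-a)^d with hVdef
    set η : ℝ := ((Cu - Cl) * V / 2) * (1 - Cl/Cu)^m with hηdef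
    have hη0 : 0 ≤ η := by
      apply mul_nonneg
      · apply div_nonneg (mul_nonneg (by linarith) hV.le) (by norm_num)
      · exact pow_nonneg (by linarith) m
    set u : (Fin d → ℝ) → ℝ := mback d E f g (m+1) (k+1) with hudef
    set v : (Fin d → ℝ) → ℝ := mback d E f g m (k+1) with hvdef
    have hvlo : ∀ z ∈ box d E, (Cl*V)^m ≤ v z :=
      fun z hz => (mback_bounds hf hg hCl hClu hab hA1 m (k+1) z hz).1
    have hvhi : ∀ z ∈ box d E, v z ≤ (Cu*V)^m :=
      fun z hz => (mback_bounds hf hg hCl hClu hab hA1 m (k+1) z hz).2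
    have hv0 : ∀ z ∈ box d E, 0 ≤ v z :=
      fun z hz => le_trans (pow_nonneg (mul_pos hCl hV).le m) (hvlo z hz)
    have hulo : ∀ z ∈ box d E, (Cl*V)^(m+1) ≤ u z :=
      fun z hz => (mback_bounds hf hg hCl hClu hab hA1 (m+1) (k+1) z hz).1
    have huhi : ∀ z ∈ box d E, u z ≤ (Cu*V)^(m+1) :=
      fun z hz => (mback_bounds hf hg hCl hClu hab hA1 (m+1) (k+1) z hz).2
    have hu_int : IntegrableOn u (box d E) volume := by
      refine aux_integrableOn (mback_meas hf hg (m+1) (k+1)) (M := (Cu*V)^(m+1)) ?_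
      intro z hz
      rw [abs_of_nonneg (le_trans (pow_nonneg (mul_pos hCl hV).le _) (hulo z hz))]
      exact huhi z hz
    have hv_int : IntegrableOn v (box d E) volume := by
      refine aux_integrableOn (mback_meas hf hg m (k+1)) (M := (Cu*V)^m) ?_
      intro z hz
      rw [abs_of_nonneg (hv0 z hz)]
      exact hvhi z hz
    set Iu : ℝ := ∫ z in box d E, u z with hIudef
    set Iv : ℝ := ∫ z in box d E, v z with hIvdef
    obtain ⟨hIvlo, hIvhi⟩ := setIntegral_bounds (F := v) hab.le
      (by rw [hvdef]; exact mback_meas hf hg m (k+1)) hvlo hvhi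
    rw [← hVdef, ← hIvdef] at hIvlo hIvhi
    have hIv0 : 0 < Iv := lt_of_lt_of_le (by positivity) hIvlo
    have hIvne : Iv ≠ 0 := ne_of_gt hIv0
    refine ⟨(Cl/Cu) * (Iu/Iv) + (1 - Cl/Cu) * c, fun x hx => ?_⟩
    -- the kernel
    have hmbA : (mback d E f g (m+1+1) k x) = ∫ z in box d E,
        f x z * g (k+1) z * u z := rfl
    have hmbB : (mback d E f g (m+1) k x) = ∫ z in box d E,
        f x z * g (k+1) z * v z := rfl
    set B : ℝ := mback d E f g (m+1) k x with hBdef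
    set A : ℝ := mback d E f g (m+1+1) k x with hAdef
    have hKu_int : IntegrableOn (fun z => f x z * g (k+1) z * u z) (box d E) volume :=
      integrand_integrable hf hg hCl hClu hab hA1 hx (m+1) k
    have hKv_int : IntegrableOn (fun z => f x z * g (k+1) z * v z) (box d E) volume :=
      integrand_integrable hf hg hCl hClu hab hA1 hx m k
    have hK : ∀ z ∈ box d E, Cl ≤ f x z * g (k+1) z ∧ f x z * g (k+1) z ≤ Cu :=
      hKbound hA1 hx k
    -- B ≤ Cu * Iv
    have hBhi : B ≤ Cu * Iv := by
      have := setIntegral_mono_on hKv_int (hv_int.const_mul Cu) box_meas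
        (fun z hz => mul_le_mul_of_nonneg_right (hK z hz).2 (hv0 z hz))
      rw [MeasureTheory.integral_const_mul, ← hIvdef] at this
      rw [hmbB]
      exact this
    -- Cl * Iv ≤ B
    have hBlo : Cl * Iv ≤ B := by
      have := setIntegral_mono_on (hv_int.const_mul Cl) hKv_int box_meas
        (fun z hz => mul_le_mul_of_nonneg_right (hK z hz).1 (hv0 z hz))
      rw [MeasureTheory.integral_const_mul, ← hIvdef] at this
      rw [hmbB]
      exact this
    have hB0 : 0 < B := lt_of_lt_of_le (by positivity) hBlo
    set t : ℝ := (Cl/Cu) * B / Iv with htdef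
    have ht0 : 0 ≤ t := by positivity
    have htCl : t ≤ Cl := by
      rw [htdef, div_le_iff₀ hIv0]
      calc Cl/Cu * B ≤ Cl/Cu * (Cu * Iv) := by
            apply mul_le_mul_of_nonneg_left hBhi hε0.le
        _ = Cl * Iv := by field_simp
    have htIv : t * Iv = (Cl/Cu) * B := by
      rw [htdef]; field_simp
    -- the identity
    have hGint : ∀ z, (f x z * g (k+1) z - t) * (u z - c * v z) =
        (f x z * g (k+1) z * u z) - c * (f x z * g (k+1) z * v z) - t * u z + (t*c) * v z :=
      fun z => by ring
    have hid : ∫ z in box d E, (f x z * g (k+1) z - t) * (u z - c * v z) =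
        A - c * B - t * Iu + (t*c) * Iv := by
      have h1 : ∫ z in box d E,
          ((f x z * g (k+1) z * u z) - c * (f x z * g (k+1) z * v z) - t * u z + (t*c) * v z) =
          (∫ z in box d E, f x z * g (k+1) z * u z)
          - c * (∫ z in box d E, f x z * g (k+1) z * v z) - t * Iu + (t*c) * Iv := by
        have i1 : Integrable (fun z => f x z * g (k+1) z * u z - c * (f x z * g (k+1) z * v z))
            (volume.restrict (box d E)) := hKu_int.sub (hKv_int.const_mul c)
        have i2 : Integrable (fun z =>
            (f x z * g (k+1) z * u z - c * (f x z * g (k+1) z * v z)) - t * u z)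
            (volume.restrict (box d E)) := i1.sub (hu_int.const_mul t)
        rw [hIudef, hIvdef,
          MeasureTheory.integral_add i2 (hv_int.const_mul (t*c)),
          MeasureTheory.integral_sub i1 (hu_int.const_mul t),
          MeasureTheory.integral_sub hKu_int (hKv_int.const_mul c),
          MeasureTheory.integral_const_mul, MeasureTheory.integral_const_mul,
          MeasureTheory.integral_const_mul]
      calc ∫ z in box d E, (f x z * g (k+1) z - t) * (u z - c * v z)
          = ∫ z in box d E,
            ((f x z * g (k+1) z * u z) - c * (f x z * g (k+1) z * v z) - t * u z + (t*c) * v z) := by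
            exact MeasureTheory.setIntegral_congr_fun box_meas (fun z _ => hGint z)
        _ = _ := by rw [h1, ← hmbA, ← hmbB]
    have hACB : A - ((Cl/Cu) * (Iu/Iv) + (1 - Cl/Cu) * c) * B =
        ∫ z in box d E, (f x z * g (k+1) z - t) * (u z - c * v z) := by
      rw [hid, htdef]
      field_simp
      ring
    -- bound the integral
    have hGnn : ∀ z ∈ box d E, 0 ≤ f x z * g (k+1) z - t :=
      fun z hz => by linarith [(hK z hz).1]
    have habs : ∀ z ∈ box d E,
        |(f x z * g (k+1) z - t) * (u z - c * v z)| ≤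
          (f x z * g (k+1) z - t) * (η * v z) := by
      intro z hz
      rw [abs_mul, abs_of_nonneg (hGnn z hz)]
      exact mul_le_mul_of_nonneg_left (hc z hz) (hGnn z hz)
    have habs_int : IntegrableOn
        (fun z => |(f x z * g (k+1) z - t) * (u z - c * v z)|) (box d E) volume := by
      have hmeas : Measurable fun z => |(f x z * g (k+1) z - t) * (u z - c * v z)| :=
        (((hf.of_uncurry_left.mul (hg (k+1))).sub measurable_const).mul
          ((mback_meas hf hg (m+1) (k+1)).sub ((mback_meas hf hg m (k+1)).const_mul c))).abs
      refine aux_integrableOn hmeas (M := Cu * (η * (Cu*V)^m)) ?_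
      intro z hz
      rw [abs_abs]
      calc |(f x z * g (k+1) z - t) * (u z - c * v z)| ≤
          (f x z * g (k+1) z - t) * (η * v z) := habs z hz
        _ ≤ Cu * (η * (Cu*V)^m) := by
            apply mul_le_mul (by linarith [(hK z hz).2])
              (mul_le_mul_of_nonneg_left (hvhi z hz) hη0)
              (mul_nonneg hη0 (hv0 z hz)) hCu.le
    have hrhs_int : IntegrableOn
        (fun z => (f x z * g (k+1) z - t) * (η * v z)) (box d E) volume := by
      have : (fun z => (f x z * g (k+1) z - t) * (η * v z)) =
          (fun z => η * (f x z * g (k+1) z * v z) - (t * η) * v z) := by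
        funext z; ring
      rw [this]
      exact (hKv_int.const_mul η).sub (hv_int.const_mul (t*η))
    have hbound : |∫ z in box d E, (f x z * g (k+1) z - t) * (u z - c * v z)| ≤
        η * (1 - Cl/Cu) * B := by
      calc |∫ z in box d E, (f x z * g (k+1) z - t) * (u z - c * v z)|
          ≤ ∫ z in box d E, |(f x z * g (k+1) z - t) * (u z - c * v z)| := by
            simpa [Real.norm_eq_abs, abs_mul] using
              MeasureTheory.norm_integral_le_integral_norm
                (μ := volume.restrict (box d E))
                (fun z => (f x z * g (k+1) z - t) * (u z - c * v z))
        _ ≤ ∫ z in box d E, (f x z * g (k+1) z - t) * (η * v z) :=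
            setIntegral_mono_on habs_int hrhs_int box_meas habs
        _ = η * B - t * η * Iv := by
            have : (fun z => (f x z * g (k+1) z - t) * (η * v z)) =
                (fun z => η * (f x z * g (k+1) z * v z) - (t * η) * v z) := by
              funext z; ring
            rw [this, MeasureTheory.integral_sub (hKv_int.const_mul η) (hv_int.const_mul (t*η)),
              MeasureTheory.integral_const_mul, MeasureTheory.integral_const_mul,
              ← hmbB, ← hIvdef]
        _ = η * (1 - Cl/Cu) * B := by
            rw [show t * η * Iv = η * (t * Iv) by ring, htIv]; ring
    rw [show ((Cu - Cl) * V / 2) * (1 - Cl/Cu)^(m+1) * B = η * (1 - Cl/Cu) * B by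
      rw [hηdef]; ring]
    rw [hACB]
    exact hbound

end Aux5

section Aux6
variable {d : ℕ} {a b : ℝ} {f0 : (Fin d → ℝ) → ℝ} {f : (Fin d → ℝ) → (Fin d → ℝ) → ℝ}
  {g : ℕ → (Fin d → ℝ) → ℝ} {Cl Cu : ℝ}
variable (hf0 : Measurable f0) (hf : Measurable (Function.uncurry f)) (hg : ∀ p, Measurable (g p))
  (hCl : 0 < Cl) (hClu : Cl < Cu) (hab : a < b)
  (hA1_0 : ∀ x ∈ box d (Set.Icc a b), Cl ≤ g 0 x * f0 x ∧ g 0 x * f0 x ≤ Cu)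
  (hA1 : ∀ p : ℕ, 1 ≤ p → ∀ x ∈ box d (Set.Icc a b), ∀ x' ∈ box d (Set.Icc a b),
    Cl ≤ g p x' * f x x' ∧ g p x' * f x x' ≤ Cu)

include hf0 hg in
lemma smden_meas (m : ℕ) (hmb : Measurable (mback d (Set.Icc a b) f g m 0)) :
    Measurable (fun y => f0 y * g 0 y * mback d (Set.Icc a b) f g m 0 y) :=
  (hf0.mul (hg 0)).mul hmb

include hf hg hCl hClu hab hA1_0 hA1 in
lemma smden_bounds (m : ℕ) :
    ∀ y ∈ box d (Set.Icc a b),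
      Cl * (Cl * (b-a)^d)^m ≤ f0 y * g 0 y * mback d (Set.Icc a b) f g m 0 y ∧
      f0 y * g 0 y * mback d (Set.Icc a b) f g m 0 y ≤ Cu * (Cu * (b-a)^d)^m := by
  have hV : (0:ℝ) < (b-a)^d := pow_pos (by linarith) d
  intro y hy
  obtain ⟨h1, h2⟩ := mback_bounds hf hg hCl hClu hab hA1 m 0 y hy
  obtain ⟨hw1, hw2⟩ := hA1_0 y hy
  rw [mul_comm] at hw1 hw2
  have h0 : (0:ℝ) ≤ mback d (Set.Icc a b) f g m 0 y :=
    le_trans (pow_nonneg (mul_pos hCl hV).le m) h1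
  constructor
  · exact mul_le_mul hw1 h1 (pow_nonneg (mul_pos hCl hV).le m) (le_trans hCl.le hw1)
  · exact mul_le_mul hw2 h2 h0 (by linarith)

include hf hg hCl hClu hab hA1_0 hA1 in
lemma smden_ratio (m : ℕ) :
    ∀ y ∈ box d (Set.Icc a b), ∀ y' ∈ box d (Set.Icc a b),
      f0 y * g 0 y * mback d (Set.Icc a b) f g m 0 y ≤
        (Cu/Cl)^2 * (f0 y' * g 0 y' * mback d (Set.Icc a b) f g m 0 y') := by
  have hV : (0:ℝ) < (b-a)^d := pow_pos (by linarith) d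
  have hCu : (0:ℝ) < Cu := hCl.trans hClu
  intro y hy y' hy'
  obtain ⟨h1, h2⟩ := mback_bounds hf hg hCl hClu hab hA1 m 0 y' hy'
  have h0' : (0:ℝ) ≤ mback d (Set.Icc a b) f g m 0 y' :=
    le_trans (pow_nonneg (mul_pos hCl hV).le m) h1
  obtain ⟨hw1, hw2⟩ := hA1_0 y hy
  obtain ⟨hw1', hw2'⟩ := hA1_0 y' hy'
  rw [mul_comm] at hw1 hw2 hw1' hw2'
  have hW : f0 y * g 0 y ≤ (Cu/Cl) * (f0 y' * g 0 y') := by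
    calc f0 y * g 0 y ≤ Cu := hw2
      _ = (Cu/Cl) * Cl := by field_simp
      _ ≤ (Cu/Cl) * (f0 y' * g 0 y') :=
        mul_le_mul_of_nonneg_left hw1' (div_nonneg hCu.le hCl.le)
  have hH := mback_spatial_ratio hf hg hCl hClu hab hA1 m 0 y hy y' hy'
  calc f0 y * g 0 y * mback d (Set.Icc a b) f g m 0 y
      ≤ ((Cu/Cl) * (f0 y' * g 0 y')) * ((Cu/Cl) * mback d (Set.Icc a b) f g m 0 y') := by
        apply mul_le_mul hW hH
          (le_trans (pow_nonneg (mul_pos hCl hV).le m)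
            (mback_bounds hf hg hCl hClu hab hA1 m 0 y hy).1)
          (mul_nonneg (div_nonneg hCu.le hCl.le) (le_trans hCl.le hw1'))
    _ = (Cu/Cl)^2 * (f0 y' * g 0 y' * mback d (Set.Icc a b) f g m 0 y') := by ring

include hf hg hCl hClu hab hA1_0 hA1 in
lemma smden_succ (m : ℕ) :
    ∀ y ∈ box d (Set.Icc a b),
      Cl * (b-a)^d * (f0 y * g 0 y * mback d (Set.Icc a b) f g m 0 y) ≤
        f0 y * g 0 y * mback d (Set.Icc a b) f g (m+1) 0 y := by
  intro y hy
  have hW : (0:ℝ) ≤ f0 y * g 0 y := by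
    have := (hA1_0 y hy).1; rw [mul_comm] at this; linarith
  have := (mback_succ_ratio hf hg hCl hClu hab hA1 m 0 y hy).1
  calc Cl * (b-a)^d * (f0 y * g 0 y * mback d (Set.Icc a b) f g m 0 y)
      = (f0 y * g 0 y) * (Cl * (b-a)^d * mback d (Set.Icc a b) f g m 0 y) := by ring
    _ ≤ (f0 y * g 0 y) * mback d (Set.Icc a b) f g (m+1) 0 y :=
        mul_le_mul_of_nonneg_left this hW
    _ = _ := by ring

include hf hg hCl hClu hab hA1_0 hA1 in
lemma smden_contract (m : ℕ) :
    ∃ c : ℝ, ∀ y ∈ box d (Set.Icc a b),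
      |f0 y * g 0 y * mback d (Set.Icc a b) f g (m+1) 0 y -
        c * (f0 y * g 0 y * mback d (Set.Icc a b) f g m 0 y)| ≤
      ((Cu - Cl) * (b-a)^d / 2) * (1 - Cl/Cu)^m *
        (f0 y * g 0 y * mback d (Set.Icc a b) f g m 0 y) := by
  obtain ⟨c, hc⟩ := mback_contraction hf hg hCl hClu hab hA1 m 0
  refine ⟨c, fun y hy => ?_⟩
  have hW : (0:ℝ) ≤ f0 y * g 0 y := by
    have := (hA1_0 y hy).1; rw [mul_comm] at this; linarith
  calc |f0 y * g 0 y * mback d (Set.Icc a b) f g (m+1) 0 y -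
        c * (f0 y * g 0 y * mback d (Set.Icc a b) f g m 0 y)|
      = |(f0 y * g 0 y) * (mback d (Set.Icc a b) f g (m+1) 0 y -
          c * mback d (Set.Icc a b) f g m 0 y)| := by congr 1; ring
    _ = (f0 y * g 0 y) * |mback d (Set.Icc a b) f g (m+1) 0 y -
          c * mback d (Set.Icc a b) f g m 0 y| := by
        rw [abs_mul, abs_of_nonneg hW]
    _ ≤ (f0 y * g 0 y) * (((Cu - Cl) * (b-a)^d / 2) * (1 - Cl/Cu)^m *
          mback d (Set.Icc a b) f g m 0 y) :=
        mul_le_mul_of_nonneg_left (hc y hy) hW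
    _ = _ := by ring

end Aux6

/-- `mixu d j x t z` : first `j` coords from `x`, coord `j` is `t`, rest from `z`. -/
def mixu (d j : ℕ) (x : Fin d → ℝ) (t : ℝ) (z : Fin d → ℝ) : Fin d → ℝ :=
  fun i => if (i : ℕ) < j then x i else if (i : ℕ) = j then t else z i

/-- `mixl d j x z` : first `j` coords from `x`, rest from `z`. -/
def mixl (d j : ℕ) (x z : Fin d → ℝ) : Fin d → ℝ :=
  fun i => if (i : ℕ) < j then x i else z i

lemma box_mem_iff {d : ℕ} {E : Set ℝ} {y : Fin d → ℝ} : y ∈ box d E ↔ ∀ i, y i ∈ E := by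
  simp [box, Set.mem_univ_pi]

lemma mixu_mem {d j : ℕ} {a b : ℝ} {x : Fin d → ℝ} {t : ℝ} {z : Fin d → ℝ}
    (hx : x ∈ box d (Set.Icc a b)) (ht : t ∈ Set.Icc a b) (hz : z ∈ box d (Set.Icc a b)) :
    mixu d j x t z ∈ box d (Set.Icc a b) := by
  rw [box_mem_iff] at hx hz ⊢
  intro i
  simp only [mixu]
  split_ifs
  · exact hx i
  · exact ht
  · exact hz i

lemma mixl_mem {d j : ℕ} {a b : ℝ} {x z : Fin d → ℝ}
    (hx : x ∈ box d (Set.Icc a b)) (hz : z ∈ box d (Set.Icc a b)) :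
    mixl d j x z ∈ box d (Set.Icc a b) := by
  rw [box_mem_iff] at hx hz ⊢
  intro i
  simp only [mixl]
  split_ifs
  · exact hx i
  · exact hz i

lemma mixu_meas (d j : ℕ) (x : Fin d → ℝ) :
    Measurable (fun r : ℝ × (Fin d → ℝ) => mixu d j x r.1 r.2) := by
  apply measurable_pi_lambda
  intro i
  by_cases h1 : (i:ℕ) < j
  · simp only [mixu, if_pos h1]; exact measurable_const
  · by_cases h2 : (i:ℕ) = j
    · simp only [mixu, if_neg h1, if_pos h2]; exact measurable_fst
    · simp only [mixu, if_neg h1, if_neg h2]; exact (measurable_pi_apply i).comp measurable_snd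

lemma mixl_meas (d j : ℕ) (x : Fin d → ℝ) : Measurable (mixl d j x) := by
  apply measurable_pi_lambda
  intro i
  by_cases h1 : (i:ℕ) < j
  · simp only [mixl, if_pos h1]; exact measurable_const
  · simp only [mixl, if_neg h1]; exact measurable_pi_apply i

lemma mixu_eq {d j : ℕ} (hj : j < d) (x : Fin d → ℝ) (t : ℝ) (z : Fin d → ℝ) :
    (fun i : Fin d => if (i : ℕ) < j + 1 then Function.update x ⟨j, hj⟩ t i else z i) =
      mixu d j x t z := by
  funext i
  simp only [mixu, Function.update_apply, Fin.ext_iff]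
  by_cases h1 : (i:ℕ) < j
  · rw [if_pos (by omega : (i:ℕ) < j+1), if_neg (by omega : ¬((i:ℕ) = j)), if_pos h1]
  · by_cases h2 : (i:ℕ) = j
    · rw [if_pos (by omega : (i:ℕ) < j+1), if_pos h2, if_neg h1, if_pos h2]
    · rw [if_neg (by omega : ¬((i:ℕ) < j+1)), if_neg h1, if_neg h2]

noncomputable def Zc (d : ℕ) (E : Set ℝ) (f0 : (Fin d → ℝ) → ℝ)
    (f : (Fin d → ℝ) → (Fin d → ℝ) → ℝ) (g : ℕ → (Fin d → ℝ) → ℝ) (m : ℕ) : ℝ :=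
  ∫ y in box d E, f0 y * g 0 y * mback d E f g m 0 y

noncomputable def Npc (d : ℕ) (E : Set ℝ) (f0 : (Fin d → ℝ) → ℝ)
    (f : (Fin d → ℝ) → (Fin d → ℝ) → ℝ) (g : ℕ → (Fin d → ℝ) → ℝ)
    (j : ℕ) (x : Fin d → ℝ) (m : ℕ) (t : ℝ) : ℝ :=
  ∫ z in box d E, f0 (mixu d j x t z) * g 0 (mixu d j x t z) *
    mback d E f g m 0 (mixu d j x t z)

noncomputable def Dmc (d : ℕ) (E : Set ℝ) (f0 : (Fin d → ℝ) → ℝ)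
    (f : (Fin d → ℝ) → (Fin d → ℝ) → ℝ) (g : ℕ → (Fin d → ℝ) → ℝ)
    (j : ℕ) (x : Fin d → ℝ) (m : ℕ) : ℝ :=
  ∫ z in box d E, f0 (mixl d j x z) * g 0 (mixl d j x z) *
    mback d E f g m 0 (mixl d j x z)

section Aux7
variable {d : ℕ} {a b : ℝ} {f0 : (Fin d → ℝ) → ℝ} {f : (Fin d → ℝ) → (Fin d → ℝ) → ℝ}
  {g : ℕ → (Fin d → ℝ) → ℝ}

lemma marg_up {j : ℕ} (hj : j < d) (m : ℕ) (t : ℝ) (x : Fin d → ℝ) :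
    marg d (Set.Icc a b) (msmootherDen d (Set.Icc a b) f0 f g m) (j+1)
      (Function.update x ⟨j, hj⟩ t) =
    (Npc d (Set.Icc a b) f0 f g j x m t / Zc d (Set.Icc a b) f0 f g m) /
      (volume (Set.Icc a b)).toReal ^ (j+1) := by
  simp only [marg]
  have h1 : (∫ z in box d (Set.Icc a b), msmootherDen d (Set.Icc a b) f0 f g m
      (fun i => if (i:ℕ) < j+1 then Function.update x ⟨j, hj⟩ t i else z i)) =
      ∫ z in box d (Set.Icc a b),
        (f0 (mixu d j x t z) * g 0 (mixu d j x t z) *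
          mback d (Set.Icc a b) f g m 0 (mixu d j x t z)) / Zc d (Set.Icc a b) f0 f g m :=
    setIntegral_congr_fun box_meas (fun z _ => by rw [mixu_eq hj]; rfl)
  rw [h1, MeasureTheory.integral_div]
  rfl

lemma marg_low (j m : ℕ) (x : Fin d → ℝ) :
    marg d (Set.Icc a b) (msmootherDen d (Set.Icc a b) f0 f g m) j x =
    (Dmc d (Set.Icc a b) f0 f g j x m / Zc d (Set.Icc a b) f0 f g m) /
      (volume (Set.Icc a b)).toReal ^ j := by
  simp only [marg]
  have h1 : (∫ z in box d (Set.Icc a b), msmootherDen d (Set.Icc a b) f0 f g m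
      (fun i => if (i:ℕ) < j then x i else z i)) =
      ∫ z in box d (Set.Icc a b),
        (f0 (mixl d j x z) * g 0 (mixl d j x z) *
          mback d (Set.Icc a b) f g m 0 (mixl d j x z)) / Zc d (Set.Icc a b) f0 f g m := rfl
  rw [h1, MeasureTheory.integral_div]
  rfl

end Aux7

section Aux8
variable {d : ℕ} {a b : ℝ} {f0 : (Fin d → ℝ) → ℝ} {f : (Fin d → ℝ) → (Fin d → ℝ) → ℝ}
  {g : ℕ → (Fin d → ℝ) → ℝ} {Cl Cu : ℝ}
variable (hf0 : Measurable f0) (hf : Measurable (Function.uncurry f)) (hg : ∀ p, Measurable (g p))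
  (hCl : 0 < Cl) (hClu : Cl < Cu) (hab : a < b)
  (hA1_0 : ∀ x ∈ box d (Set.Icc a b), Cl ≤ g 0 x * f0 x ∧ g 0 x * f0 x ≤ Cu)
  (hA1 : ∀ p : ℕ, 1 ≤ p → ∀ x ∈ box d (Set.Icc a b), ∀ x' ∈ box d (Set.Icc a b),
    Cl ≤ g p x' * f x x' ∧ g p x' * f x x' ≤ Cu)

include hf0 hf hg hCl hClu hab hA1_0 hA1 in
lemma Fm_comp_int {φ : (Fin d → ℝ) → (Fin d → ℝ)} (hφm : Measurable φ)
    (hφ : ∀ z ∈ box d (Set.Icc a b), φ z ∈ box d (Set.Icc a b)) (m : ℕ) :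
    IntegrableOn (fun z => f0 (φ z) * g 0 (φ z) * mback d (Set.Icc a b) f g m 0 (φ z))
      (box d (Set.Icc a b)) volume := by
  refine aux_integrableOn ((smden_meas hf0 hg m (mback_meas hf hg m 0)).comp hφm)
    (M := Cu * (Cu * (b-a)^d)^m) ?_
  intro z hz
  obtain ⟨h1, h2⟩ := smden_bounds hf hg hCl hClu hab hA1_0 hA1 m (φ z) (hφ z hz)
  have hV : (0:ℝ) < (b-a)^d := pow_pos (by linarith) d
  rw [abs_of_nonneg (le_trans (by positivity) h1)]
  exact h2

include hf0 hf hg hCl hClu hab hA1_0 hA1 in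
lemma Fm_comp_integral_bounds {φ : (Fin d → ℝ) → (Fin d → ℝ)} (hφm : Measurable φ)
    (hφ : ∀ z ∈ box d (Set.Icc a b), φ z ∈ box d (Set.Icc a b)) (m : ℕ) :
    Cl * (Cl * (b-a)^d)^m * (b-a)^d ≤
      (∫ z in box d (Set.Icc a b), f0 (φ z) * g 0 (φ z) *
        mback d (Set.Icc a b) f g m 0 (φ z)) ∧
    (∫ z in box d (Set.Icc a b), f0 (φ z) * g 0 (φ z) *
        mback d (Set.Icc a b) f g m 0 (φ z)) ≤ Cu * (Cu * (b-a)^d)^m * (b-a)^d :=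
  setIntegral_bounds hab.le ((smden_meas hf0 hg m (mback_meas hf hg m 0)).comp hφm)
    (fun z hz => (smden_bounds hf hg hCl hClu hab hA1_0 hA1 m (φ z) (hφ z hz)).1)
    (fun z hz => (smden_bounds hf hg hCl hClu hab hA1_0 hA1 m (φ z) (hφ z hz)).2)

include hf0 hf hg hCl hClu hab hA1_0 hA1 in
lemma Fm_comp_ratio {φ ψ : (Fin d → ℝ) → (Fin d → ℝ)} (hφm : Measurable φ)
    (hψm : Measurable ψ)
    (hφ : ∀ z ∈ box d (Set.Icc a b), φ z ∈ box d (Set.Icc a b))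
    (hψ : ∀ z ∈ box d (Set.Icc a b), ψ z ∈ box d (Set.Icc a b)) (m : ℕ) :
    (∫ z in box d (Set.Icc a b), f0 (φ z) * g 0 (φ z) *
        mback d (Set.Icc a b) f g m 0 (φ z)) ≤
    (Cu/Cl)^2 * ∫ z in box d (Set.Icc a b), f0 (ψ z) * g 0 (ψ z) *
        mback d (Set.Icc a b) f g m 0 (ψ z) := by
  have := setIntegral_mono_on (Fm_comp_int hf0 hf hg hCl hClu hab hA1_0 hA1 hφm hφ m)
    ((Fm_comp_int hf0 hf hg hCl hClu hab hA1_0 hA1 hψm hψ m).const_mul ((Cu/Cl)^2))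
    box_meas
    (fun z hz => smden_ratio hf hg hCl hClu hab hA1_0 hA1 m (φ z) (hφ z hz) (ψ z) (hψ z hz))
  rwa [MeasureTheory.integral_const_mul] at this

include hf0 hf hg hCl hClu hab hA1_0 hA1 in
lemma Fm_comp_succ {φ : (Fin d → ℝ) → (Fin d → ℝ)} (hφm : Measurable φ)
    (hφ : ∀ z ∈ box d (Set.Icc a b), φ z ∈ box d (Set.Icc a b)) (m : ℕ) :
    Cl * (b-a)^d * (∫ z in box d (Set.Icc a b), f0 (φ z) * g 0 (φ z) *
        mback d (Set.Icc a b) f g m 0 (φ z)) ≤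
    (∫ z in box d (Set.Icc a b), f0 (φ z) * g 0 (φ z) *
        mback d (Set.Icc a b) f g (m+1) 0 (φ z)) := by
  have := setIntegral_mono_on
    ((Fm_comp_int hf0 hf hg hCl hClu hab hA1_0 hA1 hφm hφ m).const_mul (Cl * (b-a)^d))
    (Fm_comp_int hf0 hf hg hCl hClu hab hA1_0 hA1 hφm hφ (m+1))
    box_meas
    (fun z hz => smden_succ hf hg hCl hClu hab hA1_0 hA1 m (φ z) (hφ z hz))
  rwa [MeasureTheory.integral_const_mul] at this

include hf0 hf hg hCl hClu hab hA1_0 hA1 in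
lemma Fm_comp_contract {φ : (Fin d → ℝ) → (Fin d → ℝ)} (hφm : Measurable φ)
    (hφ : ∀ z ∈ box d (Set.Icc a b), φ z ∈ box d (Set.Icc a b)) (m : ℕ) {c : ℝ}
    (hc : ∀ y ∈ box d (Set.Icc a b),
      |f0 y * g 0 y * mback d (Set.Icc a b) f g (m+1) 0 y -
        c * (f0 y * g 0 y * mback d (Set.Icc a b) f g m 0 y)| ≤
      ((Cu - Cl) * (b-a)^d / 2) * (1 - Cl/Cu)^m *
        (f0 y * g 0 y * mback d (Set.Icc a b) f g m 0 y)) :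
    |(∫ z in box d (Set.Icc a b), f0 (φ z) * g 0 (φ z) *
        mback d (Set.Icc a b) f g (m+1) 0 (φ z)) -
      c * ∫ z in box d (Set.Icc a b), f0 (φ z) * g 0 (φ z) *
        mback d (Set.Icc a b) f g m 0 (φ z)| ≤
    ((Cu - Cl) * (b-a)^d / 2) * (1 - Cl/Cu)^m *
      ∫ z in box d (Set.Icc a b), f0 (φ z) * g 0 (φ z) *
        mback d (Set.Icc a b) f g m 0 (φ z) := by
  have hCu : (0:ℝ) < Cu := hCl.trans hClu
  have hV : (0:ℝ) < (b-a)^d := pow_pos (by linarith) d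
  set η : ℝ := ((Cu - Cl) * (b-a)^d / 2) * (1 - Cl/Cu)^m with hηdef
  have hη0 : 0 ≤ η := by
    apply mul_nonneg (div_nonneg (mul_nonneg (by linarith) hV.le) (by norm_num))
    apply pow_nonneg
    have : Cl/Cu < 1 := (div_lt_one hCu).2 hClu
    linarith
  have hint1 := Fm_comp_int hf0 hf hg hCl hClu hab hA1_0 hA1 hφm hφ (m+1)
  have hint0 := Fm_comp_int hf0 hf hg hCl hClu hab hA1_0 hA1 hφm hφ m
  have hsub : (∫ z in box d (Set.Icc a b), f0 (φ z) * g 0 (φ z) *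
        mback d (Set.Icc a b) f g (m+1) 0 (φ z)) -
      c * (∫ z in box d (Set.Icc a b), f0 (φ z) * g 0 (φ z) *
        mback d (Set.Icc a b) f g m 0 (φ z)) =
      ∫ z in box d (Set.Icc a b), (f0 (φ z) * g 0 (φ z) *
        mback d (Set.Icc a b) f g (m+1) 0 (φ z) -
        c * (f0 (φ z) * g 0 (φ z) * mback d (Set.Icc a b) f g m 0 (φ z))) := by
    rw [MeasureTheory.integral_sub hint1 (hint0.const_mul c), MeasureTheory.integral_const_mul]
  rw [hsub]
  have habs_int : IntegrableOn (fun z => |f0 (φ z) * g 0 (φ z) *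
        mback d (Set.Icc a b) f g (m+1) 0 (φ z) -
        c * (f0 (φ z) * g 0 (φ z) * mback d (Set.Icc a b) f g m 0 (φ z))|)
      (box d (Set.Icc a b)) volume := (hint1.sub (hint0.const_mul c)).abs
  calc |∫ z in box d (Set.Icc a b), (f0 (φ z) * g 0 (φ z) *
        mback d (Set.Icc a b) f g (m+1) 0 (φ z) -
        c * (f0 (φ z) * g 0 (φ z) * mback d (Set.Icc a b) f g m 0 (φ z)))|
      ≤ ∫ z in box d (Set.Icc a b), |f0 (φ z) * g 0 (φ z) *
        mback d (Set.Icc a b) f g (m+1) 0 (φ z) -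
        c * (f0 (φ z) * g 0 (φ z) * mback d (Set.Icc a b) f g m 0 (φ z))| := by
        simpa [Real.norm_eq_abs] using
          MeasureTheory.norm_integral_le_integral_norm
            (μ := volume.restrict (box d (Set.Icc a b)))
            (fun z => f0 (φ z) * g 0 (φ z) * mback d (Set.Icc a b) f g (m+1) 0 (φ z) -
              c * (f0 (φ z) * g 0 (φ z) * mback d (Set.Icc a b) f g m 0 (φ z)))
    _ ≤ ∫ z in box d (Set.Icc a b), η * (f0 (φ z) * g 0 (φ z) *
          mback d (Set.Icc a b) f g m 0 (φ z)) :=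
        setIntegral_mono_on habs_int (hint0.const_mul η) box_meas
          (fun z hz => hc (φ z) (hφ z hz))
    _ = η * ∫ z in box d (Set.Icc a b), f0 (φ z) * g 0 (φ z) *
          mback d (Set.Icc a b) f g m 0 (φ z) := MeasureTheory.integral_const_mul _ _

end Aux8

section TV
open MeasureTheory

lemma toReal_withDensity {E : Set ℝ} (hE : MeasurableSet E) (r : ℝ → ℝ)
    (hint : Integrable r (volume.restrict E)) (hnn : 0 ≤ᵐ[volume.restrict E] r)
    {B : Set ℝ} (hB : MeasurableSet B) :
    (((volume.restrict E).withDensity fun t => ENNReal.ofReal (r t)) B).toReal =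
      ∫ t in B, r t ∂(volume.restrict E) := by
  rw [withDensity_apply _ hB,
    ← MeasureTheory.ofReal_integral_eq_lintegral_ofReal (hint.restrict)
      (ae_restrict_of_ae hnn),
    ENNReal.toReal_ofReal (integral_nonneg_of_ae (ae_restrict_of_ae hnn))]

lemma tv_withDensity_le (E : Set ℝ) (hE : MeasurableSet E) (hfin : volume E ≠ ⊤)
    (r1 r0 : ℝ → ℝ) (h1m : Measurable r1) (h0m : Measurable r0) (M : ℝ)
    (h1b : ∀ t ∈ E, 0 ≤ r1 t ∧ r1 t ≤ M) (h0b : ∀ t ∈ E, 0 ≤ r0 t ∧ r0 t ≤ M)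
    (δ : ℝ) (hδ : 0 ≤ δ) (hdiff : ∀ t ∈ E, |r1 t - r0 t| ≤ δ) :
    tvDist ((volume.restrict E).withDensity fun t => ENNReal.ofReal (r1 t))
            ((volume.restrict E).withDensity fun t => ENNReal.ofReal (r0 t))
      ≤ δ * (volume E).toReal := by
  haveI hfinE : IsFiniteMeasure (volume.restrict E) :=
    ⟨by rw [Measure.restrict_apply_univ]; exact lt_top_iff_ne_top.2 hfin⟩
  set μ1 := (volume.restrict E).withDensity fun t => ENNReal.ofReal (r1 t) with hμ1
  set μ0 := (volume.restrict E).withDensity fun t => ENNReal.ofReal (r0 t) with hμ0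
  have hM0 : 0 ≤ max M 0 := le_max_right _ _
  have h1nn : 0 ≤ᵐ[volume.restrict E] r1 :=
    (ae_restrict_iff' hE).2 (Filter.Eventually.of_forall (fun t ht => (h1b t ht).1))
  have h0nn : 0 ≤ᵐ[volume.restrict E] r0 :=
    (ae_restrict_iff' hE).2 (Filter.Eventually.of_forall (fun t ht => (h0b t ht).1))
  have h1ab : ∀ᵐ t ∂(volume.restrict E), ‖r1 t‖ ≤ max M 0 := by
    filter_upwards [(ae_restrict_iff' hE).2
      (Filter.Eventually.of_forall (fun t (ht : t ∈ E) => h1b t ht))] with t ht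
    rw [Real.norm_eq_abs, abs_of_nonneg ht.1]
    exact le_max_of_le_left ht.2
  have h0ab : ∀ᵐ t ∂(volume.restrict E), ‖r0 t‖ ≤ max M 0 := by
    filter_upwards [(ae_restrict_iff' hE).2
      (Filter.Eventually.of_forall (fun t (ht : t ∈ E) => h0b t ht))] with t ht
    rw [Real.norm_eq_abs, abs_of_nonneg ht.1]
    exact le_max_of_le_left ht.2
  have hint1 : Integrable r1 (volume.restrict E) :=
    ⟨h1m.aestronglyMeasurable, HasFiniteIntegral.of_bounded h1ab⟩
  have hint0 : Integrable r0 (volume.restrict E) :=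
    ⟨h0m.aestronglyMeasurable, HasFiniteIntegral.of_bounded h0ab⟩
  have hfin1 : IsFiniteMeasure μ1 := by
    constructor
    rw [hμ1, withDensity_apply _ MeasurableSet.univ, Measure.restrict_univ]
    calc ∫⁻ t, ENNReal.ofReal (r1 t) ∂(volume.restrict E)
        ≤ ∫⁻ _, ENNReal.ofReal (max M 0) ∂(volume.restrict E) := by
          apply lintegral_mono_ae
          filter_upwards [h1ab] with t ht
          exact ENNReal.ofReal_le_ofReal (le_trans (le_abs_self _) (by
            rwa [Real.norm_eq_abs] at ht))
      _ < ⊤ := by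
          rw [lintegral_const]
          exact ENNReal.mul_lt_top ENNReal.ofReal_lt_top (measure_lt_top _ _)
  have hfin0 : IsFiniteMeasure μ0 := by
    constructor
    rw [hμ0, withDensity_apply _ MeasurableSet.univ, Measure.restrict_univ]
    calc ∫⁻ t, ENNReal.ofReal (r0 t) ∂(volume.restrict E)
        ≤ ∫⁻ _, ENNReal.ofReal (max M 0) ∂(volume.restrict E) := by
          apply lintegral_mono_ae
          filter_upwards [h0ab] with t ht
          exact ENNReal.ofReal_le_ofReal (le_trans (le_abs_self _) (by
            rwa [Real.norm_eq_abs] at ht))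
      _ < ⊤ := by
          rw [lintegral_const]
          exact ENNReal.mul_lt_top ENNReal.ofReal_lt_top (measure_lt_top _ _)
  have habs_int : Integrable (fun t => |r1 t - r0 t|) (volume.restrict E) :=
    (hint1.sub hint0).abs
  have hDtv : (∫ t, |r1 t - r0 t| ∂(volume.restrict E)) ≤ δ * (volume E).toReal := by
    calc (∫ t, |r1 t - r0 t| ∂(volume.restrict E))
        ≤ ∫ _, δ ∂(volume.restrict E) := by
          apply integral_mono_ae habs_int (integrable_const δ)
          exact (ae_restrict_iff' hE).2 (Filter.Eventually.of_forall hdiff)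
      _ = δ * (volume E).toReal := by
          rw [integral_const, measureReal_def, Measure.restrict_apply_univ, smul_eq_mul, mul_comm]
  have hkey : ∀ B : Set ℝ, MeasurableSet B →
      (μ1 B).toReal - (μ0 B).toReal ≤ δ * (volume E).toReal ∧
      (μ0 B).toReal - (μ1 B).toReal ≤ δ * (volume E).toReal := by
    intro B hB
    rw [hμ1, hμ0, toReal_withDensity hE r1 hint1 h1nn hB, toReal_withDensity hE r0 hint0 h0nn hB]
    have hsub : (∫ t in B, r1 t ∂(volume.restrict E)) - ∫ t in B, r0 t ∂(volume.restrict E) =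
        ∫ t in B, (r1 t - r0 t) ∂(volume.restrict E) :=
      (integral_sub (hint1.restrict) (hint0.restrict)).symm
    have habsle : (∫ t in B, |r1 t - r0 t| ∂(volume.restrict E)) ≤
        ∫ t, |r1 t - r0 t| ∂(volume.restrict E) :=
      setIntegral_le_integral habs_int (Filter.Eventually.of_forall (fun t => abs_nonneg _))
    constructor
    · rw [hsub]
      calc (∫ t in B, (r1 t - r0 t) ∂(volume.restrict E))
          ≤ ∫ t in B, |r1 t - r0 t| ∂(volume.restrict E) :=
            integral_mono ((hint1.restrict).sub (hint0.restrict)) (habs_int.restrict)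
              (fun t => le_abs_self _)
        _ ≤ δ * (volume E).toReal := le_trans habsle hDtv
    · rw [show (∫ t in B, r0 t ∂(volume.restrict E)) - ∫ t in B, r1 t ∂(volume.restrict E) =
          ∫ t in B, (r0 t - r1 t) ∂(volume.restrict E) from
        (integral_sub (hint0.restrict) (hint1.restrict)).symm]
      calc (∫ t in B, (r0 t - r1 t) ∂(volume.restrict E))
          ≤ ∫ t in B, |r1 t - r0 t| ∂(volume.restrict E) :=
            integral_mono ((hint0.restrict).sub (hint1.restrict)) (habs_int.restrict)
              (fun t => by rw [abs_sub_comm]; exact le_abs_self _)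
        _ ≤ δ * (volume E).toReal := le_trans habsle hDtv
  have hδV : 0 ≤ δ * (volume E).toReal := mul_nonneg hδ ENNReal.toReal_nonneg
  apply Real.iSup_le _ hδV
  intro A
  rw [abs_le]
  constructor
  · have hB : MeasurableSet (toMeasurable μ1 A) := measurableSet_toMeasurable μ1 A
    have h1 : (μ1 A).toReal = (μ1 (toMeasurable μ1 A)).toReal := by
      rw [measure_toMeasurable]
    have h0 : (μ0 A).toReal ≤ (μ0 (toMeasurable μ1 A)).toReal :=
      ENNReal.toReal_mono (measure_ne_top μ0 _) (measure_mono (subset_toMeasurable μ1 A))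
    have := (hkey _ hB).2
    linarith
  · have hB : MeasurableSet (toMeasurable μ0 A) := measurableSet_toMeasurable μ0 A
    have h0 : (μ0 A).toReal = (μ0 (toMeasurable μ0 A)).toReal := by
      rw [measure_toMeasurable]
    have h1 : (μ1 A).toReal ≤ (μ1 (toMeasurable μ0 A)).toReal :=
      ENNReal.toReal_mono (measure_ne_top μ1 _) (measure_mono (subset_toMeasurable μ0 A))
    have := (hkey _ hB).1
    linarith

end TV

set_option maxHeartbeats 2000000 in
theorem stmt8 (d : ℕ) (hd : 1 ≤ d) (a b : ℝ) (hab : a < b)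
    (f0 : (Fin d → ℝ) → ℝ) (f : (Fin d → ℝ) → (Fin d → ℝ) → ℝ)
    (g : ℕ → (Fin d → ℝ) → ℝ)
    (hf0 : Measurable f0) (hf : Measurable (Function.uncurry f))
    (hg : ∀ p, Measurable (g p))
    (Cl Cu : ℝ) (hCl : 0 < Cl) (hClu : Cl < Cu)
    (hA1_0 : ∀ x ∈ box d (Set.Icc a b), Cl ≤ g 0 x * f0 x ∧ g 0 x * f0 x ≤ Cu)
    (hA1 : ∀ p : ℕ, 1 ≤ p → ∀ x ∈ box d (Set.Icc a b), ∀ x' ∈ box d (Set.Icc a b),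
      Cl ≤ g p x' * f x x' ∧ g p x' * f x x' ≤ Cu)
    (CL : ℝ)
    (hA2_g : ∀ x x', |g 0 x - g 0 x'| ≤ CL * dist x x')
    (hA2_f : ∀ x x' z, |f x z - f x' z| ≤ CL * dist x x')
    (hA2_f0 : ∀ x x', |f0 x - f0 x'| ≤ CL * dist x x') :
    ∃ (C ρ : ℝ), 0 < C ∧ ρ ∈ Set.Ioo (0:ℝ) 1 ∧
      ∀ (j : ℕ) (hj : j < d), 1 ≤ j → ∀ p : ℕ, 1 ≤ p →
        ∀ x ∈ box d (Set.Icc a b),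
          tvDist
            (condLaw d (Set.Icc a b)
              (msmootherDen d (Set.Icc a b) f0 f g p) ⟨j, hj⟩ x)
            (condLaw d (Set.Icc a b)
              (msmootherDen d (Set.Icc a b) f0 f g (p - 1)) ⟨j, hj⟩ x)
          ≤ C * ρ ^ (p - 1) := by
  have hCu : (0:ℝ) < Cu := hCl.trans hClu
  have hba : (0:ℝ) < b - a := by linarith
  have hV : (0:ℝ) < (b-a)^d := pow_pos hba d
  have hε1 : Cl/Cu < 1 := (div_lt_one hCu).2 hClu
  have hε0 : (0:ℝ) < Cl/Cu := div_pos hCl hCu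
  have hρ0 : (0:ℝ) ≤ 1 - Cl/Cu := by linarith
  refine ⟨(Cu - Cl) * (Cu/Cl)^2 / Cl, 1 - Cl/Cu,
    div_pos (mul_pos (by linarith) (pow_pos (div_pos hCu hCl) 2)) hCl,
    ⟨by linarith, by linarith⟩, ?_⟩
  intro j hj hj1 p hp x hx
  obtain ⟨q, rfl⟩ : ∃ q, p = q + 1 := ⟨p - 1, (Nat.succ_pred_eq_of_pos hp).symm⟩
  rw [Nat.add_sub_cancel]
  have hVE : (volume (Set.Icc a b)).toReal = b - a := by
    rw [Real.volume_Icc, ENNReal.toReal_ofReal hba.le]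
  have hρq : (0:ℝ) ≤ (1 - Cl/Cu)^q := pow_nonneg hρ0 q
  have hmixu_meas : ∀ t : ℝ, Measurable (fun z => mixu d j x t z) :=
    fun t => (mixu_meas d j x).comp measurable_prodMk_left
  have hφu : ∀ t ∈ Set.Icc a b, ∀ z ∈ box d (Set.Icc a b),
      mixu d j x t z ∈ box d (Set.Icc a b) :=
    fun t ht z hz => mixu_mem hx ht hz
  have hφl : ∀ z ∈ box d (Set.Icc a b), mixl d j x z ∈ box d (Set.Icc a b) :=
    fun z hz => mixl_mem hx hz
  have hD_lo : ∀ m : ℕ, Cl * (Cl*(b-a)^d)^m * (b-a)^d ≤ Dmc d (Set.Icc a b) f0 f g j x m :=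
    fun m => (Fm_comp_integral_bounds hf0 hf hg hCl hClu hab hA1_0 hA1
      (mixl_meas d j x) hφl m).1
  have hDpos : ∀ m, 0 < Dmc d (Set.Icc a b) f0 f g j x m :=
    fun m => lt_of_lt_of_le (by positivity) (hD_lo m)
  have hZpos : ∀ m, 0 < Zc d (Set.Icc a b) f0 f g m := by
    intro m
    have h := (Fm_comp_integral_bounds hf0 hf hg hCl hClu hab hA1_0 hA1
      (measurable_id) (fun z hz => hz) m).1
    exact lt_of_lt_of_le (by positivity) h
  have hN_nn : ∀ m, ∀ t ∈ Set.Icc a b, 0 ≤ Npc d (Set.Icc a b) f0 f g j x m t := by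
    intro m t ht
    have h := (Fm_comp_integral_bounds hf0 hf hg hCl hClu hab hA1_0 hA1
      (hmixu_meas t) (hφu t ht) m).1
    exact le_trans (by positivity) h
  have hN_le : ∀ m, ∀ t ∈ Set.Icc a b,
      Npc d (Set.Icc a b) f0 f g j x m t ≤ (Cu/Cl)^2 * Dmc d (Set.Icc a b) f0 f g j x m :=
    fun m t ht => Fm_comp_ratio hf0 hf hg hCl hClu hab hA1_0 hA1 (hmixu_meas t)
      (mixl_meas d j x) (hφu t ht) hφl m
  have hD_succ : ∀ m, Cl * (b-a)^d * Dmc d (Set.Icc a b) f0 f g j x m ≤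
      Dmc d (Set.Icc a b) f0 f g j x (m+1) :=
    fun m => Fm_comp_succ hf0 hf hg hCl hClu hab hA1_0 hA1 (mixl_meas d j x) hφl m
  obtain ⟨c, hc⟩ := smden_contract (f0 := f0) hf hg hCl hClu hab hA1_0 hA1 q
  have hNc : ∀ t ∈ Set.Icc a b,
      |Npc d (Set.Icc a b) f0 f g j x (q+1) t - c * Npc d (Set.Icc a b) f0 f g j x q t| ≤
      ((Cu - Cl) * (b-a)^d / 2) * (1 - Cl/Cu)^q * Npc d (Set.Icc a b) f0 f g j x q t :=
    fun t ht => Fm_comp_contract hf0 hf hg hCl hClu hab hA1_0 hA1 (hmixu_meas t)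
      (hφu t ht) q hc
  have hDc : |Dmc d (Set.Icc a b) f0 f g j x (q+1) - c * Dmc d (Set.Icc a b) f0 f g j x q| ≤
      ((Cu - Cl) * (b-a)^d / 2) * (1 - Cl/Cu)^q * Dmc d (Set.Icc a b) f0 f g j x q :=
    Fm_comp_contract hf0 hf hg hCl hClu hab hA1_0 hA1 (mixl_meas d j x) hφl q hc
  have hη0 : (0:ℝ) ≤ ((Cu - Cl) * (b-a)^d / 2) * (1 - Cl/Cu)^q :=
    mul_nonneg (div_nonneg (mul_nonneg (by linarith) hV.le) (by norm_num)) hρq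
  -- the density ratio formula
  have hr_eq : ∀ m t,
      marg d (Set.Icc a b) (msmootherDen d (Set.Icc a b) f0 f g m) (j+1)
        (Function.update x ⟨j, hj⟩ t) /
      marg d (Set.Icc a b) (msmootherDen d (Set.Icc a b) f0 f g m) j x =
      Npc d (Set.Icc a b) f0 f g j x m t / (Dmc d (Set.Icc a b) f0 f g j x m * (b-a)) := by
    intro m t
    rw [marg_up hj, marg_low, hVE]
    have hZ := (hZpos m).ne'
    have hD := (hDpos m).ne'
    field_simp
    ring
  have hNmeas : ∀ m, Measurable (fun t => Npc d (Set.Icc a b) f0 f g j x m t) := by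
    intro m
    have hΦ : Measurable fun r : ℝ × (Fin d → ℝ) =>
        f0 (mixu d j x r.1 r.2) * g 0 (mixu d j x r.1 r.2) *
          mback d (Set.Icc a b) f g m 0 (mixu d j x r.1 r.2) :=
      (smden_meas hf0 hg m (mback_meas hf hg m 0)).comp (mixu_meas d j x)
    exact hΦ.stronglyMeasurable.integral_prod_right'.measurable
  have hRmeas : ∀ m, Measurable (fun t =>
      marg d (Set.Icc a b) (msmootherDen d (Set.Icc a b) f0 f g m) (j+1)
        (Function.update x ⟨j, hj⟩ t) /
      marg d (Set.Icc a b) (msmootherDen d (Set.Icc a b) f0 f g m) j x) := by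
    intro m
    have : (fun t =>
        marg d (Set.Icc a b) (msmootherDen d (Set.Icc a b) f0 f g m) (j+1)
          (Function.update x ⟨j, hj⟩ t) /
        marg d (Set.Icc a b) (msmootherDen d (Set.Icc a b) f0 f g m) j x) =
        fun t => Npc d (Set.Icc a b) f0 f g j x m t /
          (Dmc d (Set.Icc a b) f0 f g j x m * (b-a)) := funext fun t => hr_eq m t
    rw [this]
    exact (hNmeas m).div_const _
  have hRbounds : ∀ m, ∀ t ∈ Set.Icc a b,
      0 ≤ (marg d (Set.Icc a b) (msmootherDen d (Set.Icc a b) f0 f g m) (j+1)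
        (Function.update x ⟨j, hj⟩ t) /
      marg d (Set.Icc a b) (msmootherDen d (Set.Icc a b) f0 f g m) j x) ∧
      (marg d (Set.Icc a b) (msmootherDen d (Set.Icc a b) f0 f g m) (j+1)
        (Function.update x ⟨j, hj⟩ t) /
      marg d (Set.Icc a b) (msmootherDen d (Set.Icc a b) f0 f g m) j x) ≤
        (Cu/Cl)^2/(b-a) := by
    intro m t ht
    rw [hr_eq m t]
    have hD := hDpos m
    constructor
    · exact div_nonneg (hN_nn m t ht) (mul_pos hD hba).le
    · calc Npc d (Set.Icc a b) f0 f g j x m t /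
            (Dmc d (Set.Icc a b) f0 f g j x m * (b-a))
          ≤ ((Cu/Cl)^2 * Dmc d (Set.Icc a b) f0 f g j x m) /
            (Dmc d (Set.Icc a b) f0 f g j x m * (b-a)) := by
            exact (div_le_div_iff_of_pos_right (mul_pos hD hba)).2 (hN_le m t ht)
        _ = (Cu/Cl)^2/(b-a) := by
            rw [mul_comm ((Cu/Cl)^2) (Dmc d (Set.Icc a b) f0 f g j x m),
              mul_div_mul_left _ _ hD.ne']
  have hdiff : ∀ t ∈ Set.Icc a b,
      |(marg d (Set.Icc a b) (msmootherDen d (Set.Icc a b) f0 f g (q+1)) (j+1)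
          (Function.update x ⟨j, hj⟩ t) /
        marg d (Set.Icc a b) (msmootherDen d (Set.Icc a b) f0 f g (q+1)) j x) -
       (marg d (Set.Icc a b) (msmootherDen d (Set.Icc a b) f0 f g q) (j+1)
          (Function.update x ⟨j, hj⟩ t) /
        marg d (Set.Icc a b) (msmootherDen d (Set.Icc a b) f0 f g q) j x)| ≤
      ((Cu - Cl) * (Cu/Cl)^2 / Cl * (1 - Cl/Cu)^q) / (b-a) := by
    intro t ht
    rw [hr_eq (q+1) t, hr_eq q t]
    set N1 : ℝ := Npc d (Set.Icc a b) f0 f g j x (q+1) t with hN1def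
    set N0 : ℝ := Npc d (Set.Icc a b) f0 f g j x q t with hN0def
    set D1 : ℝ := Dmc d (Set.Icc a b) f0 f g j x (q+1) with hD1def
    set D0 : ℝ := Dmc d (Set.Icc a b) f0 f g j x q with hD0def
    set η : ℝ := ((Cu - Cl) * (b-a)^d / 2) * (1 - Cl/Cu)^q with hηdef
    set K : ℝ := (Cu - Cl) * (Cu/Cl)^2 / Cl * (1 - Cl/Cu)^q with hKdef
    have hD1p : 0 < D1 := hDpos (q+1)
    have hD0p : 0 < D0 := hDpos q
    have hN0nn : 0 ≤ N0 := hN_nn q t ht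
    have hK0 : 0 ≤ K := by
      rw [hKdef]
      apply mul_nonneg (div_nonneg (mul_nonneg (by linarith) (by positivity)) hCl.le) hρq
    have hnum : |N1*D0 - N0*D1| ≤ 2*η*(N0*D0) := by
      have e : N1*D0 - N0*D1 = (N1 - c*N0)*D0 - N0*(D1 - c*D0) := by ring
      rw [e]
      calc |(N1 - c*N0)*D0 - N0*(D1 - c*D0)|
          ≤ |(N1 - c*N0)*D0| + |N0*(D1 - c*D0)| := abs_sub _ _
        _ = |N1 - c*N0| * D0 + N0 * |D1 - c*D0| := by
            rw [abs_mul, abs_mul, abs_of_nonneg hD0p.le, abs_of_nonneg hN0nn]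
        _ ≤ (η*N0)*D0 + N0*(η*D0) :=
            add_le_add (mul_le_mul_of_nonneg_right (hNc t ht) hD0p.le)
              (mul_le_mul_of_nonneg_left hDc hN0nn)
        _ = 2*η*(N0*D0) := by ring
    have hkey2 : 2*η*N0 ≤ K*D1 := by
      calc 2*η*N0 ≤ 2*η*((Cu/Cl)^2*D0) :=
            mul_le_mul_of_nonneg_left (hN_le q t ht) (by positivity)
        _ = K*(Cl*(b-a)^d*D0) := by
            rw [hηdef, hKdef]; field_simp
        _ ≤ K*D1 := mul_le_mul_of_nonneg_left (hD_succ q) hK0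
    have h3 : |N1*D0 - N0*D1| ≤ K*(D1*D0) := by
      calc |N1*D0 - N0*D1| ≤ 2*η*(N0*D0) := hnum
        _ = (2*η*N0)*D0 := by ring
        _ ≤ (K*D1)*D0 := mul_le_mul_of_nonneg_right hkey2 hD0p.le
        _ = K*(D1*D0) := by ring
    have e2 : N1/(D1*(b-a)) - N0/(D0*(b-a)) = (N1*D0 - N0*D1)/(D1*D0*(b-a)) := by
      field_simp
    rw [e2, abs_div, abs_of_pos (show (0:ℝ) < D1*D0*(b-a) by positivity)]
    calc |N1*D0 - N0*D1| / (D1*D0*(b-a))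
        ≤ (K*(D1*D0)) / (D1*D0*(b-a)) :=
          (div_le_div_iff_of_pos_right (by positivity)).2 h3
      _ = K/(b-a) := by
          rw [mul_comm K (D1*D0), mul_div_mul_left _ _ (mul_pos hD1p hD0p).ne']
  have hK0' : (0:ℝ) ≤ (Cu - Cl) * (Cu/Cl)^2 / Cl * (1 - Cl/Cu)^q :=
    mul_nonneg (div_nonneg (mul_nonneg (by linarith) (by positivity)) hCl.le) hρq
  have htv := tv_withDensity_le (Set.Icc a b) measurableSet_Icc
    (by rw [Real.volume_Icc]; exact ENNReal.ofReal_ne_top)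
    (fun t => marg d (Set.Icc a b) (msmootherDen d (Set.Icc a b) f0 f g (q+1)) (j+1)
        (Function.update x ⟨j, hj⟩ t) /
      marg d (Set.Icc a b) (msmootherDen d (Set.Icc a b) f0 f g (q+1)) j x)
    (fun t => marg d (Set.Icc a b) (msmootherDen d (Set.Icc a b) f0 f g q) (j+1)
        (Function.update x ⟨j, hj⟩ t) /
      marg d (Set.Icc a b) (msmootherDen d (Set.Icc a b) f0 f g q) j x)
    (hRmeas (q+1)) (hRmeas q) ((Cu/Cl)^2/(b-a))
    (fun t ht => hRbounds (q+1) t ht) (fun t ht => hRbounds q t ht)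
    (((Cu - Cl) * (Cu/Cl)^2 / Cl * (1 - Cl/Cu)^q) / (b-a))
    (div_nonneg hK0' hba.le) hdiff
  rw [hVE, div_mul_cancel₀ _ hba.ne'] at htv
  exact htv
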